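/- In the setting of the discrete approximation scheme for the stochastic dynamical system x_{t+1} = f(x_t, ω_t) (with quantization errors θ_{d,t} ≤ ε at every time step t and approximators P̂_{x_{t+1}} := f#Δ_{R_t,C_t}#(P̂_{x_t} × P_ω)), if the dynamics f is Lipschitz continuous in (x, ω) with Lipschitz constant L_f < 1, then the approximation error satisfies lim_{t → ∞} W_ρ(P_{x_t}, P̂_{x_t}) ≤ L_f ε / (1 − L_f); i.e. the error bounds θ_t defined by θ_{t+1} = L_f(θ_t + ε) converge to the fixed point L_f ε / (1 − L_f), which asymptotically bounds W_ρ(P_{x_t}, P̂_{x_t}). -/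

import Mathlib

open MeasureTheory ENNReal

noncomputable section

/-- `ℝ^d` with the Euclidean norm. -/
abbrev Euc (d : ℕ) : Type := EuclideanSpace ℝ (Fin d)

/-- The set of couplings `Γ(μ, ν)` of two measures: probability measures on the product
whose first marginal is `μ` and second marginal is `ν`. -/
def Couplings {β : Type*} [MeasurableSpace β] (μ ν : Measure β) :
    Set (Measure (β × β)) :=
  {γ | IsProbabilityMeasure γ ∧ γ.map Prod.fst = μ ∧ γ.map Prod.snd = ν}

/-- The ρ-Wasserstein distance
`W_ρ(μ, ν) = (inf_{γ ∈ Γ(μ,ν)} ∫ ‖x - y‖^ρ dγ(x,y))^{1/ρ}`. -/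
noncomputable def Wass {β : Type*} [MeasurableSpace β] [NormedAddCommGroup β]
    (ρ : ℝ) (μ ν : Measure β) : ℝ :=
  ((⨅ γ ∈ Couplings μ ν, ∫⁻ p, ENNReal.ofReal (‖p.1 - p.2‖ ^ ρ) ∂γ).toReal) ^ (1/ρ)

/-- `μ` has finite ρ-th moment: `∫ ‖x‖^ρ dμ(x) < ∞`. -/
def HasFiniteMoment {β : Type*} [MeasurableSpace β] [NormedAddCommGroup β]
    (ρ : ℝ) (μ : Measure β) : Prop :=
  ∫⁻ x, ENNReal.ofReal (‖x‖ ^ ρ) ∂μ < ⊤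

/-- A measurable partition of a set `X` into `N` regions. -/
def IsMeasPartition {β : Type*} [MeasurableSpace β] {N : ℕ}
    (R : Fin N → Set β) (X : Set β) : Prop :=
  (∀ i, MeasurableSet (R i)) ∧ (⋃ i, R i) = X ∧ ∀ i j, i ≠ j → R i ∩ R j = ∅

/-- The quantization operator `Δ_{R,C}(x) = Σ_i c_i 1_{R_i}(x)`. -/
noncomputable def quantMap {β : Type*} [AddCommMonoid β] {N : ℕ}
    (R : Fin N → Set β) (c : Fin N → β) (x : β) : β :=
  ∑ i, (R i).indicator (fun _ => c i) x



lemma measurable_quantMap {d q N : ℕ} (R : Fin N → Set (Euc d × Euc q))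
    (c : Fin N → Euc d × Euc q) (hR : ∀ i, MeasurableSet (R i)) :
    Measurable (quantMap R c) := by
  unfold quantMap
  exact Finset.measurable_sum _ fun i _ =>
    (measurable_const.indicator (hR i))

lemma quantMap_eq_of_mem {d q N : ℕ} {R : Fin N → Set (Euc d × Euc q)}
    {c : Fin N → Euc d × Euc q} (hdisj : ∀ i j, i ≠ j → R i ∩ R j = ∅)
    {k : Fin N} {z : Euc d × Euc q} (hz : z ∈ R k) :
    quantMap R c z = c k := by
  unfold quantMap
  rw [Finset.sum_eq_single k]
  · simp [Set.indicator_of_mem hz]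
  · intro i _ hik
    have : z ∉ R i := by
      intro hzi
      have := hdisj i k hik
      exact absurd (Set.mem_inter hzi hz) (by simp [this])
    simp [Set.indicator_of_notMem this]
  · intro h; exact absurd (Finset.mem_univ k) h

lemma rpow_add_le_aux {a b ρ : ℝ} (ha : 0 ≤ a) (hb : 0 ≤ b) (hρ : 0 ≤ ρ) :
    (a + b) ^ ρ ≤ 2 ^ ρ * (a ^ ρ + b ^ ρ) := by
  have hmax : a + b ≤ 2 * max a b := by
    rcases le_total a b with h | h
    · simp [max_eq_right h]; linarith
    · simp [max_eq_left h]; linarith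
  have h1 : (a + b) ^ ρ ≤ (2 * max a b) ^ ρ :=
    Real.rpow_le_rpow (by linarith) hmax hρ
  have h2 : (2 * max a b) ^ ρ = 2 ^ ρ * (max a b) ^ ρ :=
    Real.mul_rpow (by norm_num) (le_max_of_le_left ha)
  have h3 : (max a b) ^ ρ ≤ a ^ ρ + b ^ ρ := by
    rcases le_total a b with h | h
    · rw [max_eq_right h]
      have := Real.rpow_nonneg ha ρ; linarith
    · rw [max_eq_left h]
      have := Real.rpow_nonneg hb ρ; linarith
  calc (a + b) ^ ρ ≤ 2 ^ ρ * (max a b) ^ ρ := by rw [← h2]; exact h1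
    _ ≤ 2 ^ ρ * (a ^ ρ + b ^ ρ) := by
        have : (0:ℝ) ≤ 2 ^ ρ := Real.rpow_nonneg (by norm_num) ρ
        nlinarith

-- quantization error bound in lintegral form
lemma quant_bound {d q N : ℕ} {ρ ε : ℝ} (hρ : 1 ≤ ρ) (hε : 0 < ε)
    (μ : Measure (Euc d × Euc q)) [IsProbabilityMeasure μ]
    (hmom : HasFiniteMoment ρ μ)
    (R : Fin N → Set (Euc d × Euc q)) (c : Fin N → Euc d × Euc q)
    (hR : IsMeasPartition R Set.univ)
    (hθ : (∑ k, ∫ z in R k, ‖z - c k‖ ^ ρ ∂μ) ^ (1/ρ) ≤ ε) :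
    ∫⁻ z, ENNReal.ofReal (‖z - quantMap R c z‖ ^ ρ) ∂μ ≤ ENNReal.ofReal (ε ^ ρ) := by
  obtain ⟨hmeas, hcover, hdisj⟩ := hR
  have hρ0 : (0:ℝ) < ρ := lt_of_lt_of_le one_pos hρ
  have hdisj' : Pairwise (Function.onFun Disjoint R) := by
    intro i j hij
    exact Set.disjoint_iff_inter_eq_empty.mpr (hdisj i j hij)
  -- split integral over partition
  have hsplit : ∫⁻ z, ENNReal.ofReal (‖z - quantMap R c z‖ ^ ρ) ∂μ
      = ∑ k, ∫⁻ z in R k, ENNReal.ofReal (‖z - c k‖ ^ ρ) ∂μ := by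
    have huniv : ∫⁻ z, ENNReal.ofReal (‖z - quantMap R c z‖ ^ ρ) ∂μ
        = ∫⁻ z in ⋃ i, R i, ENNReal.ofReal (‖z - quantMap R c z‖ ^ ρ) ∂μ := by
      rw [hcover, Measure.restrict_univ]
    rw [huniv, lintegral_iUnion hmeas hdisj' _, tsum_fintype]
    congr 1
    ext k
    apply setLIntegral_congr_fun (hmeas k)
    intro z hz
    simp only [quantMap_eq_of_mem hdisj hz]
  rw [hsplit]
  -- each piece is finite
  have hfin : ∀ k, ∫⁻ z in R k, ENNReal.ofReal (‖z - c k‖ ^ ρ) ∂μ < ⊤ := by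
    intro k
    have hb : ∀ z, ENNReal.ofReal (‖z - c k‖ ^ ρ)
        ≤ ENNReal.ofReal (2 ^ ρ) * (ENNReal.ofReal (‖z‖ ^ ρ) + ENNReal.ofReal (‖c k‖ ^ ρ)) := by
      intro z
      have h1 : ‖z - c k‖ ^ ρ ≤ 2 ^ ρ * (‖z‖ ^ ρ + ‖c k‖ ^ ρ) := by
        have := rpow_add_le_aux (norm_nonneg z) (norm_nonneg (c k)) (le_of_lt hρ0)
        have htri : ‖z - c k‖ ≤ ‖z‖ + ‖c k‖ := norm_sub_le z (c k)
        calc ‖z - c k‖ ^ ρ ≤ (‖z‖ + ‖c k‖) ^ ρ :=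
              Real.rpow_le_rpow (norm_nonneg _) htri (le_of_lt hρ0)
          _ ≤ 2 ^ ρ * (‖z‖ ^ ρ + ‖c k‖ ^ ρ) := this
      calc ENNReal.ofReal (‖z - c k‖ ^ ρ) ≤ ENNReal.ofReal (2 ^ ρ * (‖z‖ ^ ρ + ‖c k‖ ^ ρ)) :=
            ENNReal.ofReal_le_ofReal h1
        _ = ENNReal.ofReal (2 ^ ρ) * (ENNReal.ofReal (‖z‖ ^ ρ) + ENNReal.ofReal (‖c k‖ ^ ρ)) := by
            rw [ENNReal.ofReal_mul (Real.rpow_nonneg (by norm_num) ρ),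
              ENNReal.ofReal_add (Real.rpow_nonneg (norm_nonneg _) ρ)
                (Real.rpow_nonneg (norm_nonneg _) ρ)]
    calc ∫⁻ z in R k, ENNReal.ofReal (‖z - c k‖ ^ ρ) ∂μ
        ≤ ∫⁻ z in R k, ENNReal.ofReal (2 ^ ρ) * (ENNReal.ofReal (‖z‖ ^ ρ) + ENNReal.ofReal (‖c k‖ ^ ρ)) ∂μ :=
          lintegral_mono fun z => hb z
      _ ≤ ∫⁻ z, ENNReal.ofReal (2 ^ ρ) * (ENNReal.ofReal (‖z‖ ^ ρ) + ENNReal.ofReal (‖c k‖ ^ ρ)) ∂μ :=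
          setLIntegral_le_lintegral _ _
      _ = ENNReal.ofReal (2 ^ ρ) * ((∫⁻ z, ENNReal.ofReal (‖z‖ ^ ρ) ∂μ) + ENNReal.ofReal (‖c k‖ ^ ρ) * μ Set.univ) := by
          rw [lintegral_const_mul _ (by
            exact ((continuous_norm.rpow_const (fun z => Or.inr (le_of_lt hρ0))).measurable.ennreal_ofReal).add measurable_const),
            lintegral_add_right _ measurable_const, lintegral_const]
      _ < ⊤ := by
          apply ENNReal.mul_lt_top ENNReal.ofReal_lt_top
          apply ENNReal.add_lt_top.mpr
          exact ⟨hmom, ENNReal.mul_lt_top ENNReal.ofReal_lt_top (by simp)⟩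
  -- convert each piece to a Bochner integral
  have hconv : ∀ k, ∫⁻ z in R k, ENNReal.ofReal (‖z - c k‖ ^ ρ) ∂μ
      = ENNReal.ofReal (∫ z in R k, ‖z - c k‖ ^ ρ ∂μ) := by
    intro k
    rw [ofReal_integral_eq_lintegral_ofReal]
    · constructor
      · exact (((continuous_id.sub continuous_const).norm.rpow_const
          (fun z => Or.inr (le_of_lt hρ0))).measurable).aestronglyMeasurable
      · rw [hasFiniteIntegral_iff_norm]
        have : ∀ z : Euc d × Euc q, ENNReal.ofReal ‖‖z - c k‖ ^ ρ‖ = ENNReal.ofReal (‖z - c k‖ ^ ρ) := by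
          intro z
          rw [Real.norm_of_nonneg (Real.rpow_nonneg (norm_nonneg _) ρ)]
        simp_rw [this]
        exact hfin k
    · filter_upwards with z
      exact Real.rpow_nonneg (norm_nonneg _) ρ
  have hsum_nonneg : ∀ k : Fin N, (0:ℝ) ≤ ∫ z in R k, ‖z - c k‖ ^ ρ ∂μ := fun k =>
    integral_nonneg fun z => Real.rpow_nonneg (norm_nonneg _) ρ
  calc ∑ k, ∫⁻ z in R k, ENNReal.ofReal (‖z - c k‖ ^ ρ) ∂μ
      = ENNReal.ofReal (∑ k, ∫ z in R k, ‖z - c k‖ ^ ρ ∂μ) := by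
        rw [ENNReal.ofReal_sum_of_nonneg fun k _ => hsum_nonneg k]
        exact Finset.sum_congr rfl fun k _ => hconv k
    _ ≤ ENNReal.ofReal (ε ^ ρ) := by
        apply ENNReal.ofReal_le_ofReal
        have hs : (0:ℝ) ≤ ∑ k, ∫ z in R k, ‖z - c k‖ ^ ρ ∂μ :=
          Finset.sum_nonneg fun k _ => hsum_nonneg k
        have := Real.rpow_le_rpow (Real.rpow_nonneg hs _) hθ (le_of_lt hρ0)
        rwa [← Real.rpow_mul hs, one_div_mul_cancel (ne_of_gt hρ0),
          Real.rpow_one] at this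

lemma step_lemma {d q : ℕ} {ρ : ℝ} (hρ : 1 ≤ ρ) {ε : ℝ} (hε : 0 < ε)
    (f : Euc d × Euc q → Euc d) (hf : Measurable f) (Lf : NNReal) (hLip : LipschitzWith Lf f)
    (Pω : Measure (Euc q)) [IsProbabilityMeasure Pω]
    (μ ν : Measure (Euc d)) [IsProbabilityMeasure μ] [IsProbabilityMeasure ν]
    (Δ : Euc d × Euc q → Euc d × Euc q) (hΔ : Measurable Δ)
    (hq : ∫⁻ z, ENNReal.ofReal (‖z - Δ z‖ ^ ρ) ∂(ν.prod Pω) ≤ ENNReal.ofReal (ε ^ ρ))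
    (γ : Measure (Euc d × Euc d)) (hγ : γ ∈ Couplings μ ν) :
    (⨅ γ' ∈ Couplings ((μ.prod Pω).map f) (((ν.prod Pω).map Δ).map f),
      ∫⁻ p, ENNReal.ofReal (‖p.1 - p.2‖ ^ ρ) ∂γ')
    ≤ (ENNReal.ofReal Lf *
        ((∫⁻ p, ENNReal.ofReal (‖p.1 - p.2‖ ^ ρ) ∂γ) ^ (1/ρ) + ENNReal.ofReal ε)) ^ ρ := by
  obtain ⟨hγprob, hγ1, hγ2⟩ := hγ
  haveI := hγprob
  have hρ0 : (0:ℝ) < ρ := lt_of_lt_of_le one_pos hρ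
  set g : (Euc d × Euc d) × Euc q → (Euc d × Euc q) × (Euc d × Euc q) :=
    fun w => ((w.1.1, w.2), (w.1.2, w.2)) with hgdef
  have hg : Measurable g :=
    ((measurable_fst.fst.prodMk measurable_snd)).prodMk
      ((measurable_fst.snd.prodMk measurable_snd))
  set F : (Euc d × Euc q) × (Euc d × Euc q) → Euc d × Euc d :=
    fun p => (f p.1, f (Δ p.2)) with hFdef
  have hF : Measurable F := (hf.comp measurable_fst).prodMk ((hf.comp hΔ).comp measurable_snd)
  set γ₃ : Measure (Euc d × Euc d) := ((γ.prod Pω).map g).map F with hγ₃def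
  have hγ₃ : γ₃ = (γ.prod Pω).map (F ∘ g) := Measure.map_map hF hg
  -- marginal computations
  have hmap1 : (γ.prod Pω).map (Prod.map Prod.fst (id : Euc q → Euc q)) = μ.prod Pω := by
    rw [← Measure.map_prod_map _ _ measurable_fst measurable_id, hγ1, Measure.map_id]
  have hmap2 : (γ.prod Pω).map (Prod.map Prod.snd (id : Euc q → Euc q)) = ν.prod Pω := by
    rw [← Measure.map_prod_map _ _ measurable_snd measurable_id, hγ2, Measure.map_id]
  have hm1 : γ₃.map Prod.fst = (μ.prod Pω).map f := by
    rw [hγ₃, Measure.map_map measurable_fst (hF.comp hg)]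
    have : (Prod.fst ∘ (F ∘ g)) = f ∘ (Prod.map Prod.fst (id : Euc q → Euc q)) := rfl
    rw [this, ← Measure.map_map hf (measurable_fst.prodMap measurable_id), hmap1]
  have hm2 : γ₃.map Prod.snd = ((ν.prod Pω).map Δ).map f := by
    rw [hγ₃, Measure.map_map measurable_snd (hF.comp hg)]
    have : (Prod.snd ∘ (F ∘ g)) = (f ∘ Δ) ∘ (Prod.map Prod.snd (id : Euc q → Euc q)) := rfl
    rw [this, ← Measure.map_map (hf.comp hΔ) (measurable_snd.prodMap measurable_id), hmap2,
      Measure.map_map hf hΔ]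
  have hγ₃prob : IsProbabilityMeasure γ₃ := by
    rw [hγ₃]; exact Measure.isProbabilityMeasure_map ((hF.comp hg).aemeasurable)
  have hmem : γ₃ ∈ Couplings ((μ.prod Pω).map f) (((ν.prod Pω).map Δ).map f) :=
    ⟨hγ₃prob, hm1, hm2⟩
  -- the infimum is at most the value at γ₃
  have hinf : (⨅ γ' ∈ Couplings ((μ.prod Pω).map f) (((ν.prod Pω).map Δ).map f),
      ∫⁻ p, ENNReal.ofReal (‖p.1 - p.2‖ ^ ρ) ∂γ')
      ≤ ∫⁻ p, ENNReal.ofReal (‖p.1 - p.2‖ ^ ρ) ∂γ₃ := iInf₂_le γ₃ hmem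
  refine hinf.trans ?_
  -- compute the integral over γ₃
  have hKm : Measurable fun p : Euc d × Euc d => ENNReal.ofReal (‖p.1 - p.2‖ ^ ρ) :=
    (((continuous_fst.sub continuous_snd).norm.rpow_const
      (fun _ => Or.inr (le_of_lt hρ0))).measurable).ennreal_ofReal
  have hint : ∫⁻ p, ENNReal.ofReal (‖p.1 - p.2‖ ^ ρ) ∂γ₃
      = ∫⁻ w, ENNReal.ofReal (‖f (w.1.1, w.2) - f (Δ (w.1.2, w.2))‖ ^ ρ) ∂(γ.prod Pω) := by
    rw [hγ₃, lintegral_map hKm (hF.comp hg)]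
    rfl
  rw [hint]
  -- pointwise Lipschitz bound
  set G : (Euc d × Euc d) × Euc q → ℝ≥0∞ := fun w => ENNReal.ofReal ‖w.1.1 - w.1.2‖ with hGdef
  set H : (Euc d × Euc d) × Euc q → ℝ≥0∞ :=
    fun w => ENNReal.ofReal ‖(w.1.2, w.2) - Δ (w.1.2, w.2)‖ with hHdef
  have hGm : Measurable G := ((measurable_fst.fst.sub measurable_fst.snd).norm).ennreal_ofReal
  have hmsnd : Measurable fun w : (Euc d × Euc d) × Euc q => (w.1.2, w.2) :=
    measurable_fst.snd.prodMk measurable_snd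
  have hHm : Measurable H := ((hmsnd.sub (hΔ.comp hmsnd)).norm).ennreal_ofReal
  have hpt : ∀ w : (Euc d × Euc d) × Euc q,
      ENNReal.ofReal (‖f (w.1.1, w.2) - f (Δ (w.1.2, w.2))‖ ^ ρ)
      ≤ (ENNReal.ofReal Lf * (G w + H w)) ^ ρ := by
    intro w
    set u : Euc d × Euc q := (w.1.1, w.2)
    set v : Euc d × Euc q := (w.1.2, w.2)
    have h1 : ‖f u - f (Δ v)‖ ≤ (Lf : ℝ) * ‖u - Δ v‖ := by
      simpa [dist_eq_norm] using hLip.dist_le_mul u (Δ v)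
    have h2 : ‖u - Δ v‖ ≤ ‖u - v‖ + ‖v - Δ v‖ := by
      simpa [dist_eq_norm] using dist_triangle u v (Δ v)
    have h3 : ‖u - v‖ = ‖w.1.1 - w.1.2‖ := by
      rw [Prod.norm_def]
      simp [u, v, sub_self]
    have hreal : ‖f u - f (Δ v)‖ ≤ (Lf : ℝ) * (‖w.1.1 - w.1.2‖ + ‖v - Δ v‖) := by
      have := h2; rw [h3] at this
      calc ‖f u - f (Δ v)‖ ≤ (Lf : ℝ) * ‖u - Δ v‖ := h1
        _ ≤ (Lf : ℝ) * (‖w.1.1 - w.1.2‖ + ‖v - Δ v‖) := by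
            exact mul_le_mul_of_nonneg_left this Lf.coe_nonneg
    calc ENNReal.ofReal (‖f u - f (Δ v)‖ ^ ρ)
        = (ENNReal.ofReal ‖f u - f (Δ v)‖) ^ ρ :=
          (ENNReal.ofReal_rpow_of_nonneg (norm_nonneg _) (le_of_lt hρ0)).symm
      _ ≤ (ENNReal.ofReal ((Lf : ℝ) * (‖w.1.1 - w.1.2‖ + ‖v - Δ v‖))) ^ ρ :=
          ENNReal.rpow_le_rpow (ENNReal.ofReal_le_ofReal hreal) (le_of_lt hρ0)
      _ = (ENNReal.ofReal Lf * (G w + H w)) ^ ρ := by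
          rw [ENNReal.ofReal_mul Lf.coe_nonneg,
            ENNReal.ofReal_add (norm_nonneg _) (norm_nonneg _)]
  have hGH : Measurable fun w => (ENNReal.ofReal (Lf : ℝ) * (G w + H w)) ^ ρ := by
    apply Measurable.pow_const
    exact (measurable_const.mul (hGm.add hHm))
  calc ∫⁻ w, ENNReal.ofReal (‖f (w.1.1, w.2) - f (Δ (w.1.2, w.2))‖ ^ ρ) ∂(γ.prod Pω)
      ≤ ∫⁻ w, (ENNReal.ofReal Lf * (G w + H w)) ^ ρ ∂(γ.prod Pω) := lintegral_mono hpt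
    _ = (ENNReal.ofReal Lf) ^ ρ * ∫⁻ w, (G w + H w) ^ ρ ∂(γ.prod Pω) := by
        simp_rw [ENNReal.mul_rpow_of_nonneg _ _ (le_of_lt hρ0)]
        rw [lintegral_const_mul _ (f := fun w => (G w + H w) ^ ρ) ((hGm.add hHm).pow_const _)]
    _ ≤ (ENNReal.ofReal Lf) ^ ρ *
        ((∫⁻ p, ENNReal.ofReal (‖p.1 - p.2‖ ^ ρ) ∂γ) ^ (1/ρ) + ENNReal.ofReal ε) ^ ρ := by
        apply mul_le_mul_right
        -- Minkowski then marginals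
        have hmink := ENNReal.lintegral_Lp_add_le (μ := γ.prod Pω)
          hGm.aemeasurable hHm.aemeasurable hρ
        have hGint : ∫⁻ w, G w ^ ρ ∂(γ.prod Pω) = ∫⁻ p, ENNReal.ofReal (‖p.1 - p.2‖ ^ ρ) ∂γ := by
          have hmfst : (γ.prod Pω).map Prod.fst = γ := by
            rw [Measure.map_fst_prod]; simp
          conv_rhs => rw [← hmfst]
          rw [lintegral_map hKm measurable_fst]
          apply lintegral_congr
          intro w
          rw [hGdef]
          exact ENNReal.ofReal_rpow_of_nonneg (norm_nonneg _) (le_of_lt hρ0)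
        have hHint : ∫⁻ w, H w ^ ρ ∂(γ.prod Pω)
            = ∫⁻ z, ENNReal.ofReal (‖z - Δ z‖ ^ ρ) ∂(ν.prod Pω) := by
          have hKm2 : Measurable fun z : Euc d × Euc q => ENNReal.ofReal (‖z - Δ z‖ ^ ρ) :=
            ((Real.continuous_rpow_const (le_of_lt hρ0)).measurable.comp
              ((measurable_id.sub hΔ).norm)).ennreal_ofReal
          conv_rhs => rw [← hmap2]
          rw [lintegral_map hKm2 (measurable_snd.prodMap measurable_id)]
          apply lintegral_congr
          intro w
          rw [hHdef]
          exact ENNReal.ofReal_rpow_of_nonneg (norm_nonneg _) (le_of_lt hρ0)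
        rw [hGint, hHint] at hmink
        have hεpow : (∫⁻ z, ENNReal.ofReal (‖z - Δ z‖ ^ ρ) ∂(ν.prod Pω)) ^ (1/ρ)
            ≤ ENNReal.ofReal ε := by
          calc (∫⁻ z, ENNReal.ofReal (‖z - Δ z‖ ^ ρ) ∂(ν.prod Pω)) ^ (1/ρ)
              ≤ (ENNReal.ofReal (ε ^ ρ)) ^ (1/ρ) :=
                ENNReal.rpow_le_rpow hq (by positivity)
            _ = ENNReal.ofReal ε := by
                rw [← ENNReal.ofReal_rpow_of_nonneg (le_of_lt hε) (le_of_lt hρ0),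
                  ← ENNReal.rpow_mul, mul_one_div_cancel (ne_of_gt hρ0), ENNReal.rpow_one]
        calc ∫⁻ w, (G w + H w) ^ ρ ∂(γ.prod Pω)
            = ((∫⁻ w, (G w + H w) ^ ρ ∂(γ.prod Pω)) ^ (1/ρ)) ^ ρ := by
              rw [← ENNReal.rpow_mul, one_div_mul_cancel (ne_of_gt hρ0), ENNReal.rpow_one]
          _ ≤ ((∫⁻ p, ENNReal.ofReal (‖p.1 - p.2‖ ^ ρ) ∂γ) ^ (1/ρ) + ENNReal.ofReal ε) ^ ρ := by
              apply ENNReal.rpow_le_rpow _ (le_of_lt hρ0)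
              refine le_trans (le_trans (le_of_eq ?_) hmink) ?_
              · congr 1
              · exact add_le_add_right hεpow _
    _ = (ENNReal.ofReal Lf *
        ((∫⁻ p, ENNReal.ofReal (‖p.1 - p.2‖ ^ ρ) ∂γ) ^ (1/ρ) + ENNReal.ofReal ε)) ^ ρ := by
        rw [ENNReal.mul_rpow_of_nonneg _ _ (le_of_lt hρ0)]


/-- Theorem: approximation error dynamics, part ii. In the discrete
approximation scheme for `x_{t+1} = f(x_t, ω_t)` with per-step quantization errors
`θ_{d,t} ≤ ε`, if `f` is Lipschitz in `(x, ω)` with constant `L_f < 1`, then the error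
bounds `θ_t` defined by `θ_{t+1} = L_f (θ_t + ε)` converge to the fixed point
`L_f ε / (1 − L_f)`, and `lim_{t→∞} W_ρ(P_{x_t}, P̂_{x_t}) ≤ L_f ε / (1 − L_f)`. -/
theorem stmt10 {d q : ℕ} (ρ : ℝ) (hρ : 1 ≤ ρ) (ε : ℝ) (hε : 0 < ε)
    -- the dynamics: Lipschitz in `(x, ω)` with constant `L_f < 1`
    (f : Euc d × Euc q → Euc d) (hf : Measurable f)
    (Lf : NNReal) (hLip : LipschitzWith Lf f) (hLf : (Lf : ℝ) < 1)
    -- initial and noise distributions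
    (Px0 : Measure (Euc d)) (hPx0 : IsProbabilityMeasure Px0)
    (Pω : Measure (Euc q)) (hPω : IsProbabilityMeasure Pω)
    -- the true state distributions: `P_{x_{t+1}} = f#(P_{x_t} × P_ω)`
    (Px : ℕ → Measure (Euc d))
    (hPx0' : Px 0 = Px0)
    (hPxsucc : ∀ t, Px (t + 1) = ((Px t).prod Pω).map f)
    -- partitions and locations on the joint state-noise space
    (N : ℕ → ℕ)
    (R : (t : ℕ) → Fin (N t) → Set (Euc d × Euc q))
    (c : (t : ℕ) → Fin (N t) → Euc d × Euc q)
    (hR : ∀ t, IsMeasPartition (R t) Set.univ)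
    -- the approximating state distributions: `P̂_{x_0} = P_{x_0}`,
    -- `P̂_{x_{t+1}} = f#Δ_{R_t,C_t}#(P̂_{x_t} × P_ω)`
    (Phat : ℕ → Measure (Euc d))
    (hPhat0 : Phat 0 = Px0)
    (hPhatsucc : ∀ t,
      Phat (t + 1) = (((Phat t).prod Pω).map (quantMap (R t) (c t))).map f)
    -- all measures involved have finite ρ-th moments
    (hmomPx : ∀ t, HasFiniteMoment ρ (Px t))
    (hmomPhat : ∀ t, HasFiniteMoment ρ (Phat t))
    (hmomJoint : ∀ t, HasFiniteMoment ρ ((Phat t).prod Pω))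
    (hmomω : HasFiniteMoment ρ Pω)
    -- the quantization errors satisfy `θ_{d,t} ≤ ε`
    (hθd : ∀ t,
      (∑ k, ∫ z in R t k, ‖z - c t k‖ ^ ρ ∂((Phat t).prod Pω)) ^ (1/ρ) ≤ ε) :
    -- the error bounds `θ_{t+1} = L_f (θ_t + ε)` converge to `L_f ε / (1 − L_f)` ...
    (∀ θ : ℕ → ℝ, (∀ t, θ (t + 1) = (Lf : ℝ) * (θ t + ε)) →
      Filter.Tendsto θ Filter.atTop (nhds ((Lf : ℝ) * ε / (1 - (Lf : ℝ))))) ∧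
    -- ... and the fixed point asymptotically bounds the approximation error:
    -- `lim_{t→∞} W_ρ(P_{x_t}, P̂_{x_t}) ≤ L_f ε / (1 − L_f)`
    (∀ δ : ℝ, 0 < δ → ∃ T : ℕ, ∀ t ≥ T,
      Wass ρ (Px t) (Phat t) ≤ (Lf : ℝ) * ε / (1 - (Lf : ℝ)) + δ) := by
  haveI := hPx0
  haveI := hPω
  have hρ0 : (0:ℝ) < ρ := lt_of_lt_of_le one_pos hρ
  have hLf0 : (0:ℝ) ≤ (Lf : ℝ) := Lf.coe_nonneg
  have h1Lf : (0:ℝ) < 1 - (Lf : ℝ) := by linarith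
  set L : ℝ := (Lf : ℝ) * ε / (1 - (Lf : ℝ)) with hLdef
  have hL0 : 0 ≤ L := div_nonneg (by positivity) (le_of_lt h1Lf)
  have hfix : (1 - (Lf : ℝ)) * L = (Lf : ℝ) * ε := by
    rw [hLdef]; field_simp
  constructor
  · -- part 1: convergence of the error bounds
    intro θ hθ
    have hform : ∀ t, θ t = L + (Lf : ℝ) ^ t * (θ 0 - L) := by
      intro t
      induction t with
      | zero => simp
      | succ n ih =>
        rw [hθ n, ih, pow_succ]
        linear_combination -hfix
    have htend : Filter.Tendsto (fun t => L + (Lf : ℝ) ^ t * (θ 0 - L))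
        Filter.atTop (nhds (L + 0 * (θ 0 - L))) := by
      exact Filter.Tendsto.add tendsto_const_nhds
        (Filter.Tendsto.mul_const _ (tendsto_pow_atTop_nhds_zero_of_lt_one hLf0 hLf))
    rw [zero_mul, add_zero] at htend
    exact htend.congr fun t => (hform t).symm
  · -- part 2: asymptotic bound on the Wasserstein distance
    intro δ hδ
    refine ⟨0, fun t _ => ?_⟩
    -- probability instances
    have hPxprob : ∀ t, IsProbabilityMeasure (Px t) := by
      intro t
      induction t with
      | zero => rw [hPx0']; exact hPx0
      | succ n ih =>
        rw [hPxsucc n]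
        haveI := ih
        exact Measure.isProbabilityMeasure_map hf.aemeasurable
    have hΔm : ∀ t, Measurable (quantMap (R t) (c t)) := fun t =>
      measurable_quantMap _ _ (hR t).1
    have hPhatprob : ∀ t, IsProbabilityMeasure (Phat t) := by
      intro t
      induction t with
      | zero => rw [hPhat0]; exact hPx0
      | succ n ih =>
        rw [hPhatsucc n]
        haveI := ih
        haveI : IsProbabilityMeasure (((Phat n).prod Pω).map (quantMap (R n) (c n))) :=
          Measure.isProbabilityMeasure_map (hΔm n).aemeasurable
        exact Measure.isProbabilityMeasure_map hf.aemeasurable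
    have hQ : ∀ t, ∫⁻ z, ENNReal.ofReal (‖z - quantMap (R t) (c t) z‖ ^ ρ)
        ∂((Phat t).prod Pω) ≤ ENNReal.ofReal (ε ^ ρ) := by
      intro t
      haveI := hPhatprob t
      exact quant_bound hρ hε _ (hmomJoint t) _ _ (hR t) (hθd t)
    set M : ℝ := L + δ with hMdef
    have hM0 : 0 ≤ M := by positivity
    set η : ℝ := (1 - (Lf : ℝ)) * δ with hηdef
    have hη0 : 0 < η := mul_pos h1Lf hδ
    have key : ∀ t, (⨅ γ ∈ Couplings (Px t) (Phat t),
        ∫⁻ p, ENNReal.ofReal (‖p.1 - p.2‖ ^ ρ) ∂γ) ≤ ENNReal.ofReal (M ^ ρ) := by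
      intro t
      induction t with
      | zero =>
        rw [hPx0', hPhat0]
        have hdiag : Measurable fun x : Euc d => (x, x) :=
          measurable_id.prodMk measurable_id
        have hmem : Px0.map (fun x => (x, x)) ∈ Couplings Px0 Px0 := by
          refine ⟨Measure.isProbabilityMeasure_map hdiag.aemeasurable, ?_, ?_⟩
          · rw [Measure.map_map measurable_fst hdiag]
            exact Measure.map_id
          · rw [Measure.map_map measurable_snd hdiag]
            exact Measure.map_id
        refine le_trans (iInf₂_le _ hmem) ?_
        have hKm : Measurable fun p : Euc d × Euc d => ENNReal.ofReal (‖p.1 - p.2‖ ^ ρ) :=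
          (((continuous_fst.sub continuous_snd).norm.rpow_const
            (fun _ => Or.inr (le_of_lt hρ0))).measurable).ennreal_ofReal
        rw [lintegral_map hKm hdiag]
        simp [Real.zero_rpow (ne_of_gt hρ0)]
      | succ n ih =>
        haveI := hPxprob n
        haveI := hPhatprob n
        -- extract a near-optimal coupling
        have hlt : (⨅ γ ∈ Couplings (Px n) (Phat n),
            ∫⁻ p, ENNReal.ofReal (‖p.1 - p.2‖ ^ ρ) ∂γ) < ENNReal.ofReal ((M + η) ^ ρ) := by
          refine lt_of_le_of_lt ih ?_
          rw [ENNReal.ofReal_lt_ofReal_iff (by positivity)]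
          exact Real.rpow_lt_rpow hM0 (lt_add_of_pos_right M hη0) hρ0
        simp only [iInf_lt_iff] at hlt
        obtain ⟨γ, hmemS, hval⟩ := hlt
        have hA : (∫⁻ p, ENNReal.ofReal (‖p.1 - p.2‖ ^ ρ) ∂γ) ^ (1/ρ)
            ≤ ENNReal.ofReal (M + η) := by
          calc (∫⁻ p, ENNReal.ofReal (‖p.1 - p.2‖ ^ ρ) ∂γ) ^ (1/ρ)
              ≤ (ENNReal.ofReal ((M + η) ^ ρ)) ^ (1/ρ) :=
                ENNReal.rpow_le_rpow (le_of_lt hval) (by positivity)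
            _ = ENNReal.ofReal (M + η) := by
                rw [← ENNReal.ofReal_rpow_of_nonneg (by positivity) (le_of_lt hρ0),
                  ← ENNReal.rpow_mul, mul_one_div_cancel (ne_of_gt hρ0), ENNReal.rpow_one]
        have hstep := step_lemma hρ hε f hf Lf hLip Pω (Px n) (Phat n)
          (quantMap (R n) (c n)) (hΔm n) (hQ n) γ hmemS
        rw [hPxsucc n, hPhatsucc n]
        refine le_trans hstep ?_
        have hkey : (Lf : ℝ) * (M + η + ε) ≤ M := by
          rw [hMdef, hηdef]
          nlinarith [hfix, sq_nonneg (1 - (Lf : ℝ)), hδ, hLf0]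
        calc (ENNReal.ofReal Lf *
            ((∫⁻ p, ENNReal.ofReal (‖p.1 - p.2‖ ^ ρ) ∂γ) ^ (1/ρ) + ENNReal.ofReal ε)) ^ ρ
            ≤ (ENNReal.ofReal Lf * (ENNReal.ofReal (M + η) + ENNReal.ofReal ε)) ^ ρ :=
              ENNReal.rpow_le_rpow (mul_le_mul_right (add_le_add_left hA _) _) (le_of_lt hρ0)
          _ = ENNReal.ofReal (((Lf : ℝ) * (M + η + ε)) ^ ρ) := by
              rw [← ENNReal.ofReal_add (by positivity) (le_of_lt hε),
                ← ENNReal.ofReal_mul Lf.coe_nonneg,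
                ENNReal.ofReal_rpow_of_nonneg (by positivity) (le_of_lt hρ0)]
          _ ≤ ENNReal.ofReal (M ^ ρ) :=
              ENNReal.ofReal_le_ofReal (Real.rpow_le_rpow (by positivity) hkey (le_of_lt hρ0))
    -- conclude the Wasserstein bound
    have h1 := ENNReal.toReal_le_of_le_ofReal (by positivity) (key t)
    show Wass ρ (Px t) (Phat t) ≤ L + δ
    unfold Wass
    calc ((⨅ γ ∈ Couplings (Px t) (Phat t),
          ∫⁻ p, ENNReal.ofReal (‖p.1 - p.2‖ ^ ρ) ∂γ).toReal) ^ (1/ρ)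
        ≤ (M ^ ρ) ^ (1/ρ) := Real.rpow_le_rpow ENNReal.toReal_nonneg h1 (by positivity)
      _ = M := by
          rw [← Real.rpow_mul hM0, mul_one_div_cancel (ne_of_gt hρ0), Real.rpow_one]
      _ = L + δ := hMdef.symm  -- M = L + δ
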